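/- If f is tie-free, then for any priors π_i, π_j ∈ [0,1] the U² AUC risk is an affine function of the PN-AUC risk: R_ij(f) = (π_i − π_j)·R_PN(f) + C_ij, where C_ij = (π_i·π_j + (1−π_i)·(1−π_j))/2 + (1−π_i)·π_j is a constant not depending on f. -/

import Mathlib

open MeasureTheory

/-- The ranking risk `R(μ,ν)(f) = (μ ⊗ ν){(x,x') : f(x) < f(x')}` (as a real number). -/
noncomputable def rankRisk {X : Type*} [MeasurableSpace X]
    (μ ν : Measure X) (f : X → ℝ) : ℝ :=
  ((μ.prod ν) {p : X × X | f p.1 < f p.2}).toReal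

/-- The mixture `p_π = π·p_P + (1−π)·p_N`. -/
noncomputable def mix {X : Type*} [MeasurableSpace X]
    (pP pN : Measure X) (π : ℝ) : Measure X :=
  ENNReal.ofReal π • pP + ENNReal.ofReal (1 - π) • pN

/-- `f` is tie-free: ties have probability zero under every product of the
class-conditional distributions. -/
def TieFree {X : Type*} [MeasurableSpace X] (pP pN : Measure X) (f : X → ℝ) : Prop :=
  ∀ μ ∈ ({pP, pN} : Set (Measure X)), ∀ ν ∈ ({pP, pN} : Set (Measure X)),
    (μ.prod ν) {p : X × X | f p.1 = f p.2} = 0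

section Aux

variable {X : Type*} [MeasurableSpace X]

lemma smul_prod_aux (c : ENNReal) (μ ν : Measure X) [SFinite μ] [SFinite ν] :
    (c • μ).prod ν = c • μ.prod ν := by
  ext s hs
  rw [Measure.smul_apply, smul_eq_mul, Measure.prod_apply hs, Measure.prod_apply hs,
    lintegral_smul_measure, smul_eq_mul]

lemma prod_smul_aux (c : ENNReal) (hc : c ≠ ⊤) (μ ν : Measure X) [SFinite μ] [SFinite ν] :
    μ.prod (c • ν) = c • μ.prod ν := by
  ext s hs
  rw [Measure.smul_apply, smul_eq_mul, Measure.prod_apply hs, Measure.prod_apply hs]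
  simp_rw [Measure.smul_apply, smul_eq_mul]
  rw [lintegral_const_mul' _ _ hc]

lemma rank_compl (μ ν : Measure X) [IsProbabilityMeasure μ] [IsProbabilityMeasure ν]
    (f : X → ℝ) (hf : Measurable f)
    (h0 : (μ.prod ν) {p : X × X | f p.1 = f p.2} = 0) :
    rankRisk μ ν f + rankRisk ν μ f = 1 := by
  set A : Set (X × X) := {p : X × X | f p.1 < f p.2} with hA
  set B : Set (X × X) := {p : X × X | f p.2 < f p.1} with hB
  have hAm : MeasurableSet A := measurableSet_lt (hf.comp measurable_fst) (hf.comp measurable_snd)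
  have hBm : MeasurableSet B := measurableSet_lt (hf.comp measurable_snd) (hf.comp measurable_fst)
  have hEm : MeasurableSet {p : X × X | f p.1 = f p.2} :=
    measurableSet_eq_fun (hf.comp measurable_fst) (hf.comp measurable_snd)
  have hswap : (ν.prod μ) A = (μ.prod ν) B := by
    rw [← Measure.prod_swap, Measure.map_apply measurable_swap hAm]
    congr 1
  have hdisj : Disjoint A B := by
    rw [Set.disjoint_left]
    intro p hp hq
    exact lt_asymm (a := f p.1) hp hq
  have hunion : A ∪ B = {p : X × X | f p.1 = f p.2}ᶜ := by
    ext p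
    simp only [Set.mem_union, Set.mem_compl_iff, Set.mem_setOf_eq, hA, hB]
    constructor
    · rintro (h | h) he <;> simp [he] at h
    · intro h
      rcases lt_trichotomy (f p.1) (f p.2) with h1 | h1 | h1
      · exact Or.inl h1
      · exact absurd h1 h
      · exact Or.inr h1
  have hsum : (μ.prod ν) A + (μ.prod ν) B = 1 := by
    rw [← measure_union hdisj hBm, hunion, measure_compl hEm (by simp), h0]
    simp
  have hAfin : (μ.prod ν) A ≠ ⊤ := measure_ne_top _ _
  have hBfin : (μ.prod ν) B ≠ ⊤ := measure_ne_top _ _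
  have : rankRisk μ ν f + rankRisk ν μ f = (((μ.prod ν) A) + ((μ.prod ν) B)).toReal := by
    rw [ENNReal.toReal_add hAfin hBfin]
    unfold rankRisk
    rw [hswap]
  rw [this, hsum]
  simp

end Aux

/-- for tie-free `f`, the U² AUC risk is an affine function of the
PN-AUC risk: `R_ij(f) = (π_i − π_j)·R_PN(f) + C_ij`. -/
theorem u2_risk_affine_in_pn_risk {X : Type*} [MeasurableSpace X]
    (pP pN : Measure X) [IsProbabilityMeasure pP] [IsProbabilityMeasure pN]
    (f : X → ℝ) (hf : Measurable f) (htf : TieFree pP pN f)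
    (πi πj : ℝ) (hπi : πi ∈ Set.Icc (0 : ℝ) 1) (hπj : πj ∈ Set.Icc (0 : ℝ) 1) :
    rankRisk (mix pP pN πi) (mix pP pN πj) f =
      (πi - πj) * rankRisk pP pN f
      + ((πi * πj + (1 - πi) * (1 - πj)) / 2 + (1 - πi) * πj) := by
  obtain ⟨hi0, hi1⟩ := hπi
  obtain ⟨hj0, hj1⟩ := hπj
  set A : Set (X × X) := {p : X × X | f p.1 < f p.2} with hA
  -- expand the product of mixtures
  have hPP : (pP.prod pP) {p : X × X | f p.1 = f p.2} = 0 := htf pP (by simp) pP (by simp)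
  have hPN : (pP.prod pN) {p : X × X | f p.1 = f p.2} = 0 := htf pP (by simp) pN (by simp)
  have hNP : (pN.prod pP) {p : X × X | f p.1 = f p.2} = 0 := htf pN (by simp) pP (by simp)
  have hNN : (pN.prod pN) {p : X × X | f p.1 = f p.2} = 0 := htf pN (by simp) pN (by simp)
  have hPPhalf : rankRisk pP pP f = 1 / 2 := by
    have := rank_compl pP pP f hf hPP; linarith
  have hNNhalf : rankRisk pN pN f = 1 / 2 := by
    have := rank_compl pN pN f hf hNN; linarith
  have hNPval : rankRisk pN pP f = 1 - rankRisk pP pN f := by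
    have := rank_compl pP pN f hf hPN; linarith
  have expand : (mix pP pN πi).prod (mix pP pN πj) =
      (ENNReal.ofReal πj * ENNReal.ofReal πi) • pP.prod pP
      + (ENNReal.ofReal (1 - πj) * ENNReal.ofReal πi) • pP.prod pN
      + (ENNReal.ofReal πj * ENNReal.ofReal (1 - πi)) • pN.prod pP
      + (ENNReal.ofReal (1 - πj) * ENNReal.ofReal (1 - πi)) • pN.prod pN := by
    unfold mix
    simp only [Measure.add_prod, Measure.prod_add, smul_prod_aux,
      prod_smul_aux _ ENNReal.ofReal_ne_top, smul_add, smul_smul]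
    abel
  have hfin : ∀ (μ ν : Measure X) [IsProbabilityMeasure μ] [IsProbabilityMeasure ν],
      (μ.prod ν) A ≠ ⊤ := fun μ ν _ _ => measure_ne_top _ _
  have key : rankRisk (mix pP pN πi) (mix pP pN πj) f =
      πi * πj * rankRisk pP pP f + πi * (1 - πj) * rankRisk pP pN f
      + (1 - πi) * πj * rankRisk pN pP f + (1 - πi) * (1 - πj) * rankRisk pN pN f := by
    unfold rankRisk
    rw [expand]
    simp only [Measure.add_apply, Measure.smul_apply, smul_eq_mul]
    rw [ENNReal.toReal_add, ENNReal.toReal_add, ENNReal.toReal_add]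
    · simp only [ENNReal.toReal_mul, ENNReal.toReal_ofReal hi0, ENNReal.toReal_ofReal hj0,
        ENNReal.toReal_ofReal (by linarith : (0:ℝ) ≤ 1 - πi),
        ENNReal.toReal_ofReal (by linarith : (0:ℝ) ≤ 1 - πj)]
      ring
    all_goals finiteness
  rw [key, hPPhalf, hNNhalf, hNPval]
  ring
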